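/- arXiv:2401.06353 — 3 statements merged into one kernel-verified Lean document; each statement's English description precedes it below -/
import Mathlib

section
/- Let M be a reduced Krull monoid with torsion class group and let x be a nonunit of M. Suppose x^m = ∏_{a∈S(M)} a^{x_m(a)} and x^n = ∏_{a∈S(M)} a^{x_n(a)} are two decompositions of powers of x into strong atoms (with almost all exponents zero). Then x_m(a)/m = x_n(a)/n for every strong atom a. -/
/-- `a` is an atom of the (cancellative commutative) monoid `M`. -/
def IsAtomM {M : Type*} [CancelCommMonoid M] (a : M) : Prop :=
  ¬ IsUnit a ∧ ∀ b c : M, a = b * c → IsUnit b ∨ IsUnit c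

/-- `a` is a strong atom of `M`: an atom all of whose powers `a ^ n` factor uniquely into
atoms of `M` (namely as `n` copies of `a`). -/
def IsStrongAtomM {M : Type*} [CancelCommMonoid M] (a : M) : Prop :=
  IsAtomM a ∧ ∀ n : ℕ, 0 < n → ∀ s : Multiset M,
    (∀ b ∈ s, IsAtomM b) → s.prod = a ^ n → s = Multiset.replicate n a

/-- `p` is a prime element of `M`. -/
def IsPrimeM {M : Type*} [CancelCommMonoid M] (p : M) : Prop :=
  ¬ IsUnit p ∧ ∀ b c : M, p ∣ b * c → p ∣ b ∨ p ∣ c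

/-- `M` is reduced: its only unit is the identity. -/
def IsReducedM (M : Type*) [Monoid M] : Prop := ∀ u : M, IsUnit u → u = 1

/-- `τ : M → F`, with `F` the free commutative monoid on `ι` (written multiplicatively as
`Multiplicative (ι →₀ ℕ)`), is a divisor theory: (1) `τ b ∣ τ c` implies `b ∣ c`;
(2) every `d ∈ F` is a greatest common divisor of finitely many values of `τ`. -/
def IsDivisorTheory {M ι : Type*} [CancelCommMonoid M]
    (τ : M →* Multiplicative (ι →₀ ℕ)) : Prop :=
  (∀ b c : M, τ b ∣ τ c → b ∣ c) ∧
  (∀ d : Multiplicative (ι →₀ ℕ), ∃ s : Finset M, s.Nonempty ∧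
    (∀ b ∈ s, d ∣ τ b) ∧ ∀ e : Multiplicative (ι →₀ ℕ), (∀ b ∈ s, e ∣ τ b) → e ∣ d)

/-- The class group `F/τ(M)` of the divisor theory `τ` is a torsion group: every `d ∈ F`
has a power whose class is trivial, i.e. `d ^ n · τ b = τ c` for some `n ≥ 1` and `b, c ∈ M`. -/
def HasTorsionClassGroup {M ι : Type*} [CancelCommMonoid M]
    (τ : M →* Multiplicative (ι →₀ ℕ)) : Prop :=
  ∀ d : Multiplicative (ι →₀ ℕ), ∃ n : ℕ, 0 < n ∧ ∃ b c : M, d ^ n * τ b = τ c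

section Aux
variable {M ι : Type*} [CancelCommMonoid M] (τ : M →* Multiplicative (ι →₀ ℕ))

lemma tau_inj (hdt : IsDivisorTheory τ) (hred : IsReducedM M) :
    Function.Injective τ := by
  intro b c h
  obtain ⟨u, hu⟩ := hdt.1 b c (h ▸ dvd_refl _)
  obtain ⟨v, hv⟩ := hdt.1 c b (h ▸ dvd_refl _)
  have h1 : b * (u * v) = b * 1 := by rw [mul_one, ← mul_assoc, ← hu, ← hv]
  have huv : u * v = 1 := mul_left_cancel h1
  rw [hu, hred u (IsUnit.of_mul_eq_one _ huv), mul_one]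

lemma unit_iff (hdt : IsDivisorTheory τ) (hred : IsReducedM M) (u : M) :
    IsUnit u ↔ (τ u).toAdd = 0 := by
  constructor
  · intro h; rw [hred u h, map_one]; rfl
  · intro h
    have h1 : τ u = 1 := by
      have := congrArg Multiplicative.ofAdd h; simpa using this
    have : u ∣ 1 := hdt.1 u 1 (by rw [h1, map_one])
    exact isUnit_of_dvd_one this

/-- degree of an element -/
noncomputable def degM (y : M) : ℕ := ((τ y).toAdd).sum fun _ k => k

lemma degM_mul (b c : M) : degM τ (b * c) = degM τ b + degM τ c := by
  unfold degM
  rw [map_mul]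
  have : (τ b * τ c).toAdd = (τ b).toAdd + (τ c).toAdd := rfl
  rw [this, Finsupp.sum_add_index' (fun _ => rfl) (fun _ _ _ => rfl)]

lemma degM_pos (hdt : IsDivisorTheory τ) (hred : IsReducedM M) {u : M}
    (hu : ¬ IsUnit u) : 0 < degM τ u := by
  rcases Nat.eq_zero_or_pos (degM τ u) with h | h
  · exfalso
    apply hu
    rw [unit_iff τ hdt hred]
    ext p
    simp only [Finsupp.coe_zero, Pi.zero_apply]
    by_contra hp
    have hmem : p ∈ ((τ u).toAdd).support := Finsupp.mem_support_iff.2 (by simpa using hp)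
    have : (τ u).toAdd p ≤ degM τ u := Finset.single_le_sum (f := fun q => (τ u).toAdd q)
      (fun _ _ => Nat.zero_le _) hmem
    omega
  · exact h

lemma exists_atom_factorization (hdt : IsDivisorTheory τ) (hred : IsReducedM M) :
    ∀ u : M, ¬ IsUnit u → ∃ s : Multiset M, (∀ b ∈ s, IsAtomM b) ∧ s.prod = u := by
  intro u hu
  generalize hd : degM τ u = D
  induction D using Nat.strong_induction_on generalizing u with
  | _ D ih =>
    by_cases hat : IsAtomM u
    · exact ⟨{u}, by simpa using hat, by simp⟩
    · have : ∃ b c : M, u = b * c ∧ ¬ IsUnit b ∧ ¬ IsUnit c := by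
        unfold IsAtomM at hat
        push_neg at hat
        obtain ⟨b, c, h1, h2, h3⟩ := hat hu
        exact ⟨b, c, h1, h2, h3⟩
      obtain ⟨b, c, hbc, hb, hc⟩ := this
      have hdb : 0 < degM τ b := degM_pos τ hdt hred hb
      have hdc : 0 < degM τ c := degM_pos τ hdt hred hc
      have hsum : degM τ b + degM τ c = D := by rw [← hd, hbc, degM_mul]
      obtain ⟨sb, hsb1, hsb2⟩ := ih (degM τ b) (by omega) b hb rfl
      obtain ⟨sc, hsc1, hsc2⟩ := ih (degM τ c) (by omega) c hc rfl
      refine ⟨sb + sc, ?_, by rw [Multiset.prod_add, hsb2, hsc2, hbc]⟩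
      intro x hx
      rcases Multiset.mem_add.1 hx with h | h
      · exact hsb1 x h
      · exact hsc1 x h

lemma exists_atom_single (hdt : IsDivisorTheory τ) (htor : HasTorsionClassGroup τ)
    (hred : IsReducedM M) (p : ι) :
    ∃ (k : ℕ) (e : M), 0 < k ∧ IsAtomM e ∧ (τ e).toAdd = Finsupp.single p k := by
  classical
  obtain ⟨k, hk, b, c, hbc⟩ := htor (Multiplicative.ofAdd (Finsupp.single p 1))
  have hdvd : b ∣ c := hdt.1 b c ⟨_, by rw [mul_comm]; exact hbc.symm⟩
  obtain ⟨e0, he0⟩ := hdvd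
  have htau : τ e0 = Multiplicative.ofAdd (Finsupp.single p 1) ^ k := by
    have : τ b * (Multiplicative.ofAdd (Finsupp.single p 1)) ^ k = τ b * τ e0 := by
      rw [mul_comm (τ b), hbc, he0, map_mul]
    exact (mul_left_cancel this).symm
  have hνe0 : (τ e0).toAdd = Finsupp.single p k := by
    rw [htau]
    have : ((Multiplicative.ofAdd (Finsupp.single p 1)) ^ k).toAdd
        = k • (Finsupp.single p (1:ℕ)) := rfl
    rw [this, Finsupp.smul_single, smul_eq_mul, mul_one]
  have he0u : ¬ IsUnit e0 := by
    rw [unit_iff τ hdt hred, hνe0]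
    simp [Finsupp.single_eq_zero]
    omega
  obtain ⟨s, hs1, hs2⟩ := exists_atom_factorization τ hdt hred e0 he0u
  have hsne : s ≠ 0 := by
    rintro rfl
    exact he0u (by rw [← hs2]; simp)
  obtain ⟨e, he⟩ := Multiset.exists_mem_of_ne_zero hsne
  have heat : IsAtomM e := hs1 e he
  have hedvd : e ∣ e0 := hs2 ▸ Multiset.dvd_prod he
  obtain ⟨w, hw⟩ := hedvd
  have hle : ∀ q, (τ e).toAdd q ≤ Finsupp.single p k q := by
    intro q
    have : (τ e0).toAdd = (τ e).toAdd + (τ w).toAdd := by rw [hw, map_mul]; rfl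
    have h2 : (τ e0).toAdd q = (τ e).toAdd q + (τ w).toAdd q := by
      rw [this]; rfl
    rw [← hνe0]
    omega
  have hsupp : (τ e).toAdd = Finsupp.single p ((τ e).toAdd p) := by
    ext q
    by_cases hq : q = p
    · subst hq; simp
    · have := hle q
      rw [Finsupp.single_apply] at this ⊢
      simp only [if_neg (Ne.symm hq)] at this ⊢
      omega
  have hpos : 0 < (τ e).toAdd p := by
    by_contra h
    apply heat.1
    rw [unit_iff τ hdt hred, hsupp]
    simp; omega
  exact ⟨(τ e).toAdd p, e, hpos, heat, hsupp⟩

lemma strong_atom_single (hdt : IsDivisorTheory τ) (htor : HasTorsionClassGroup τ)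
    (hred : IsReducedM M) {a : M} (ha : IsStrongAtomM a) :
    ∃ (p : ι) (s : ℕ), 0 < s ∧ (τ a).toAdd = Finsupp.single p s := by
  classical
  have hau : ¬ IsUnit a := ha.1.1
  have hν : (τ a).toAdd ≠ 0 := by
    intro h; exact hau ((unit_iff τ hdt hred a).2 h)
  set w := (τ a).toAdd with hw
  have hP : w.support.Nonempty := Finsupp.support_nonempty_iff.2 hν
  obtain ⟨p0, hp0⟩ := hP
  -- choose atoms e p with τ e = single p (k p) for each p in support
  choose k e hk he1 he2 using fun p : ι => exists_atom_single τ hdt htor hred p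
  set P := w.support with hPdef
  set N := ∏ p ∈ P, k p with hN
  have hNpos : 0 < N := Finset.prod_pos (fun p _ => hk p)
  have hkdvd : ∀ p ∈ P, k p ∣ N := fun p hp => Finset.dvd_prod_of_mem k hp
  set c : ι → ℕ := fun p => N * w p / k p with hc
  have hck : ∀ p ∈ P, c p * k p = N * w p := by
    intro p hp
    exact Nat.div_mul_cancel (Dvd.dvd.mul_right (hkdvd p hp) (w p))
  -- the multiset
  set s : Multiset M := P.val.bind (fun p => Multiset.replicate (c p) (e p)) with hs
  have hsatoms : ∀ b ∈ s, IsAtomM b := by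
    intro b hb
    obtain ⟨p, hp, hbp⟩ := Multiset.mem_bind.1 hb
    rw [Multiset.eq_of_mem_replicate hbp]
    exact he1 p
  have hsprod : s.prod = a ^ N := by
    apply tau_inj τ hdt hred
    apply Multiplicative.toAdd.injective
    have h1 : s.prod = ∏ p ∈ P, e p ^ c p := by
      rw [hs, Multiset.prod_bind]
      simp [Multiset.prod_replicate]
    rw [h1]
    have h2 : (τ (∏ p ∈ P, e p ^ c p)).toAdd = ∑ p ∈ P, (c p) • (τ (e p)).toAdd := by
      rw [map_prod]
      have : (∏ p ∈ P, τ (e p ^ c p)).toAdd = ∑ p ∈ P, (τ (e p ^ c p)).toAdd := rfl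
      rw [this]
      apply Finset.sum_congr rfl
      intro p _
      rw [map_pow]
      rfl
    rw [h2]
    have h3 : (τ (a ^ N)).toAdd = N • w := by rw [map_pow]; rfl
    rw [h3]
    have h4 : ∑ p ∈ P, (c p) • (τ (e p)).toAdd = ∑ p ∈ P, Finsupp.single p (N * w p) := by
      apply Finset.sum_congr rfl
      intro p hp
      rw [he2 p, Finsupp.smul_single, smul_eq_mul, hck p hp]
    rw [h4]
    have h5 : N • w = ∑ p ∈ P, N • Finsupp.single p (w p) := by
      rw [← Finset.smul_sum]
      congr 1
      exact (Finsupp.sum_single w).symm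
    rw [h5]
    apply Finset.sum_congr rfl
    intro p _
    rw [Finsupp.smul_single, smul_eq_mul]
  have hrep := ha.2 N hNpos s hsatoms hsprod
  have hcp0 : 0 < c p0 := by
    have h1 : c p0 * k p0 = N * w p0 := hck p0 hp0
    have h2 : 0 < w p0 := by
      have := Finsupp.mem_support_iff.1 hp0
      omega
    by_contra h
    push_neg at h
    interval_cases (c p0) <;> nlinarith [hk p0, hNpos]
  have hmem : e p0 ∈ s := by
    rw [hs]
    exact Multiset.mem_bind.2 ⟨p0, hp0, Multiset.mem_replicate.2 ⟨by omega, rfl⟩⟩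
  have : e p0 = a := Multiset.eq_of_mem_replicate (hrep ▸ hmem)
  exact ⟨p0, k p0, hk p0, by rw [hw, ← this]; exact he2 p0⟩

lemma strong_atom_unique (hdt : IsDivisorTheory τ) (hred : IsReducedM M)
    {a b : M} {p : ι} {s t : ℕ} (ha : IsStrongAtomM a) (hb : IsStrongAtomM b)
    (hs : 0 < s) (ht : 0 < t)
    (hsa : (τ a).toAdd = Finsupp.single p s) (hsb : (τ b).toAdd = Finsupp.single p t) :
    b = a := by
  have key : b ^ s = a ^ t := by
    apply tau_inj τ hdt hred
    apply Multiplicative.toAdd.injective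
    have h1 : (τ (b ^ s)).toAdd = s • (τ b).toAdd := by rw [map_pow]; rfl
    have h2 : (τ (a ^ t)).toAdd = t • (τ a).toAdd := by rw [map_pow]; rfl
    rw [h1, h2, hsa, hsb, Finsupp.smul_single, Finsupp.smul_single,
      smul_eq_mul, smul_eq_mul, mul_comm]
  have hrep := ha.2 t ht (Multiset.replicate s b)
    (fun x hx => by rw [Multiset.eq_of_mem_replicate hx]; exact hb.1)
    (by rw [Multiset.prod_replicate]; exact key)
  have : b ∈ Multiset.replicate t a := by
    rw [← hrep]
    exact Multiset.mem_replicate.2 ⟨by omega, rfl⟩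
  exact Multiset.eq_of_mem_replicate this

end Aux

/-- Proportionality of decay decompositions: if `x ^ m` and `x ^ n` both factor into strong
atoms with exponent functions `f` and `g`, then `f a / m = g a / n` for every strong atom `a`. -/
theorem decay_decomposition_proportionality
    {M ι : Type*} [CancelCommMonoid M] (τ : M →* Multiplicative (ι →₀ ℕ))
    (hdt : IsDivisorTheory τ) (htor : HasTorsionClassGroup τ) (hred : IsReducedM M)
    (x : M) (hx : ¬ IsUnit x) (m n : ℕ) (hm : 0 < m) (hn : 0 < n)
    (f g : M →₀ ℕ)
    (hf : ∀ a ∈ f.support, IsStrongAtomM a) (hg : ∀ a ∈ g.support, IsStrongAtomM a)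
    (hfm : x ^ m = f.prod fun a k => a ^ k) (hgn : x ^ n = g.prod fun a k => a ^ k) :
    ∀ a : M, (f a : ℚ) / m = (g a : ℚ) / n := by
  classical
  intro a
  by_cases haS : IsStrongAtomM a
  case neg =>
    have hfa : f a = 0 := by
      by_contra h
      exact haS (hf a (Finsupp.mem_support_iff.2 h))
    have hga : g a = 0 := by
      by_contra h
      exact haS (hg a (Finsupp.mem_support_iff.2 h))
    rw [hfa, hga]; simp
  case pos =>
    obtain ⟨p, s, hs, hνa⟩ := strong_atom_single τ hdt htor hred haS
    have key : ∀ (k : ℕ) (h : M →₀ ℕ), (∀ b ∈ h.support, IsStrongAtomM b) →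
        x ^ k = h.prod (fun a i => a ^ i) → k * (τ x).toAdd p = h a * s := by
      intro k h hhS heq
      have h1 : (τ (x ^ k)).toAdd = k • (τ x).toAdd := by rw [map_pow]; rfl
      have h2 : (τ (h.prod fun a i => a ^ i)).toAdd
          = ∑ b ∈ h.support, (h b) • (τ b).toAdd := by
        rw [Finsupp.prod, map_prod]
        have : (∏ b ∈ h.support, τ (b ^ h b)).toAdd
            = ∑ b ∈ h.support, (τ (b ^ h b)).toAdd := rfl
        rw [this]
        apply Finset.sum_congr rfl
        intro b _
        rw [map_pow]
        rfl
      have h3 : k • (τ x).toAdd = ∑ b ∈ h.support, (h b) • (τ b).toAdd := by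
        rw [← h1, ← h2, heq]
      have h4 : k * (τ x).toAdd p = ((∑ b ∈ h.support, (h b) • (τ b).toAdd) : ι →₀ ℕ) p := by
        rw [← h3]; rfl
      have h5 : ((∑ b ∈ h.support, (h b) • (τ b).toAdd) : ι →₀ ℕ) p
          = ∑ b ∈ h.support, ((h b) • (τ b).toAdd) p := by
        rw [Finsupp.finset_sum_apply]
      have h6 : ∑ b ∈ h.support, ((h b) • (τ b).toAdd) p = h a * s := by
        rw [Finset.sum_eq_single a]
        · rw [Finsupp.smul_apply, smul_eq_mul, hνa, Finsupp.single_eq_same]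
        · intro b hb hba
          obtain ⟨q, t, ht, hνb⟩ := strong_atom_single τ hdt htor hred (hhS b hb)
          rw [Finsupp.smul_apply, smul_eq_mul, hνb, Finsupp.single_apply]
          have hqp : q ≠ p := by
            intro hqp
            subst hqp
            exact hba (strong_atom_unique τ hdt hred haS (hhS b hb) hs ht hνa hνb)
          rw [if_neg hqp, mul_zero]
        · intro ha
          rw [Finsupp.notMem_support_iff.1 ha, zero_smul]
          rfl
      rw [h4, h5, h6]
    have hf' := key m f hf hfm
    have hg' := key n g hg hgn
    have hmain : f a * n = g a * m := by
      have h1 : f a * s * n = g a * s * m := by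
        rw [← hf', ← hg']
        ring
      have h2 : f a * n * s = g a * m * s := by
        rw [mul_right_comm, h1, mul_right_comm]
      exact Nat.eq_of_mul_eq_mul_right hs h2
    rw [div_eq_div_iff (by exact_mod_cast hm.ne' : (m:ℚ) ≠ 0) (by exact_mod_cast hn.ne' : (n:ℚ) ≠ 0)]
    exact_mod_cast hmain
end

section
/- Let M be a reduced Krull monoid with torsion class group and σ : M → ℝ^× a scale on M. Then the sum ∑_{x ∈ ⟨S(M)⟩} 1/σ(x) converges if and only if ∑_{a ∈ S(M)} 1/σ(a) converges, and in that case ∑_{x ∈ ⟨S(M)⟩} 1/σ(x) = ∏_{a ∈ S(M)} 1/(1 − 1/σ(a)). -/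
/-- The sum `∑_{x ∈ α} f x` of nonnegative terms converges to `l` in the sense of the paper:
`l` is the least upper bound (hence supremum) of the finite partial sums. -/
def SumConvergesTo {α : Type*} (f : α → ℝ) (l : ℝ) : Prop :=
  IsLUB {y : ℝ | ∃ s : Finset α, y = ∑ x ∈ s, f x} l

/-- The product `∏_{x ∈ α} f x` of terms `≥ 1` converges to `l` in the sense of the paper:
`l` is the least upper bound (hence supremum) of the finite partial products. -/
def ProdConvergesTo {α : Type*} (f : α → ℝ) (l : ℝ) : Prop :=
  IsLUB {y : ℝ | ∃ s : Finset α, y = ∏ x ∈ s, f x} l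

section Deg
variable {ι : Type*}
lemma EP_deg_zero {f : ι →₀ ℕ} (h : f.sum (fun _ n => n) = 0) : f = 0 := by
  ext i
  by_cases hi : i ∈ f.support
  · exact (Finset.sum_eq_zero_iff.mp h) i hi
  · simpa using Finsupp.notMem_support_iff.mp hi

lemma EP_deg_add (f g : ι →₀ ℕ) :
    (f + g).sum (fun _ n => n) = f.sum (fun _ n => n) + g.sum (fun _ n => n) :=
  Finsupp.sum_add_index' (fun _ => rfl) (fun _ _ _ => rfl)
end Deg

section Alg
variable {M ι : Type*} [CancelCommMonoid M] (τ : M →* Multiplicative (ι →₀ ℕ))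

/-- additive divisor map -/
noncomputable def EPnu (m : M) : ι →₀ ℕ := (τ m).toAdd

lemma EPnu_mul (b c : M) : EPnu τ (b * c) = EPnu τ b + EPnu τ c := by
  simp [EPnu]

lemma EPnu_one : EPnu τ (1 : M) = 0 := by simp [EPnu]

lemma EPnu_pow (b : M) (n : ℕ) : EPnu τ (b ^ n) = n • EPnu τ b := by
  simp [EPnu]

variable (hdt : IsDivisorTheory τ) (hred : IsReducedM M)

lemma EP_dvd_toAdd (d e : Multiplicative (ι →₀ ℕ)) : d ∣ e ↔ d.toAdd ≤ e.toAdd := by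
  constructor
  · rintro ⟨c, rfl⟩
    simpa using le_add_of_nonneg_right (zero_le _ : (0:ι→₀ℕ) ≤ c.toAdd)
  · intro h; obtain ⟨c, hc⟩ := exists_add_of_le h
    exact ⟨Multiplicative.ofAdd c, Multiplicative.toAdd.injective (by simpa using hc)⟩

include hdt hred

lemma EP_dvd_iff (b c : M) : b ∣ c ↔ EPnu τ b ≤ EPnu τ c := by
  constructor
  · rintro ⟨m, rfl⟩; simp [EPnu_mul]
  · intro h
    exact hdt.1 b c ((EP_dvd_toAdd (τ b) (τ c)).2 h)

lemma EP_eq_one_iff (b : M) : b = 1 ↔ EPnu τ b = 0 := by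
  constructor
  · rintro rfl; exact EPnu_one τ
  · intro h
    have h1 : b ∣ 1 := (EP_dvd_iff τ hdt hred b 1).2 (by simp [EPnu_one, h])
    exact hred b (isUnit_of_dvd_one h1)

lemma EP_tau_inj (b c : M) (h : EPnu τ b = EPnu τ c) : b = c := by
  obtain ⟨m, rfl⟩ := (EP_dvd_iff τ hdt hred b c).2 h.le
  have hm : m = 1 := by
    rw [EP_eq_one_iff τ hdt hred]
    have h2 := EPnu_mul τ b m
    rw [h2] at h
    exact (add_eq_left (a := EPnu τ b)).1 h.symm
  simp [hm]

variable (htor : HasTorsionClassGroup τ)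
include htor

/-- torsion + saturation: every divisor has a multiple in the image -/
lemma EP_torsion_add (d : ι →₀ ℕ) : ∃ n : ℕ, 0 < n ∧ ∃ m : M, EPnu τ m = n • d := by
  obtain ⟨n, hn, b, c, h⟩ := htor (Multiplicative.ofAdd d)
  have hkey : n • d + EPnu τ b = EPnu τ c := by
    have := congrArg Multiplicative.toAdd h
    simpa [EPnu] using this
  have hbc : EPnu τ b ≤ EPnu τ c := le_iff_exists_add.2 ⟨n • d, by rw [← hkey, add_comm]⟩
  obtain ⟨m, rfl⟩ := (EP_dvd_iff τ hdt hred b c).2 hbc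
  refine ⟨n, hn, m, ?_⟩
  rw [EPnu_mul] at hkey
  exact (add_left_cancel (a := EPnu τ b) (by rw [← hkey]; exact add_comm _ _)).symm

omit htor

/-- atomicity -/
lemma EP_atomic (x : M) : ∃ s : Multiset M, (∀ b ∈ s, IsAtomM b) ∧ s.prod = x := by
  by_cases hx : x = 1
  · exact ⟨0, by simp, by simp [hx]⟩
  generalize hdeg : (EPnu τ x).sum (fun _ n => n) = deg
  induction deg using Nat.strong_induction_on generalizing x with
  | _ deg ih =>
    by_cases hat : IsAtomM x
    · exact ⟨{x}, by simpa using hat, by simp⟩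
    · have hnu : ¬ IsUnit x := fun h => hx (hred x h)
      simp only [IsAtomM, not_and_or, not_forall] at hat
      rcases hat with h | h
      · exact absurd hnu (by simpa using h)
      · obtain ⟨b, c, hbc, hb⟩ := h
        push_neg at hb
        obtain ⟨hbu, hcu⟩ := hb
        have hb1 : b ≠ 1 := fun h => hbu (h ▸ isUnit_one)
        have hc1 : c ≠ 1 := fun h => hcu (h ▸ isUnit_one)
        have hbp : (EPnu τ b).sum (fun _ n => n) ≠ 0 :=
          fun h => hb1 ((EP_eq_one_iff τ hdt hred b).2 (EP_deg_zero h))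
        have hcp : (EPnu τ c).sum (fun _ n => n) ≠ 0 :=
          fun h => hc1 ((EP_eq_one_iff τ hdt hred c).2 (EP_deg_zero h))
        have hsplit : (EPnu τ x).sum (fun _ n => n)
            = (EPnu τ b).sum (fun _ n => n) + (EPnu τ c).sum (fun _ n => n) := by
          rw [hbc, EPnu_mul, EP_deg_add]
        obtain ⟨sb, hsb, hsbp⟩ := ih ((EPnu τ b).sum (fun _ n => n)) (by omega) b hb1 rfl
        obtain ⟨sc, hsc, hscp⟩ := ih ((EPnu τ c).sum (fun _ n => n)) (by omega) c hc1 rfl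
        exact ⟨sb + sc, fun a ha => by
          rcases Multiset.mem_add.1 ha with h' | h'
          exacts [hsb a h', hsc a h'], by rw [Multiset.prod_add, hsbp, hscp, hbc]⟩

lemma EP_atom_ne_one (a : M) (ha : IsAtomM a) : a ≠ 1 :=
  fun h => ha.1 (h ▸ isUnit_one)

omit hdt hred in
lemma EP_prod_eq_pow_card (s : Multiset M) (a : M) (h : ∀ c ∈ s, c = a) :
    s.prod = a ^ (Multiset.card s) := by
  induction s using Multiset.induction with
  | empty => simp
  | cons x s ih =>
    rw [Multiset.prod_cons, h x (by simp), ih (fun c hc => h c (by simp [hc]))]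
    rw [Multiset.card_cons, pow_succ, mul_comm]

include htor in
lemma EP_torsion3 (d1 d2 d3 : ι →₀ ℕ) :
    ∃ n : ℕ, 0 < n ∧ ∃ m1 m2 m3 : M,
      EPnu τ m1 = n • d1 ∧ EPnu τ m2 = n • d2 ∧ EPnu τ m3 = n • d3 := by
  obtain ⟨n1, h1, m1, hm1⟩ := EP_torsion_add τ hdt hred htor d1
  obtain ⟨n2, h2, m2, hm2⟩ := EP_torsion_add τ hdt hred htor d2
  obtain ⟨n3, h3, m3, hm3⟩ := EP_torsion_add τ hdt hred htor d3
  have e1 : n2 * n3 * n1 = n1 * n2 * n3 := by ring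
  have e2 : n1 * n3 * n2 = n1 * n2 * n3 := by ring
  have e3 : n1 * n2 * n3 = n1 * n2 * n3 := rfl
  refine ⟨n1 * n2 * n3, by positivity, m1 ^ (n2 * n3), m2 ^ (n1 * n3), m3 ^ (n1 * n2),
    ?_, ?_, ?_⟩
  · rw [EPnu_pow, hm1, smul_smul, e1]
  · rw [EPnu_pow, hm2, smul_smul, e2]
  · rw [EPnu_pow, hm3, smul_smul, e3]

include htor in
/-- a strong atom that divides a positive power of a strong atom equals it -/
lemma EP_dvd_strong (a : M) (ha : IsStrongAtomM a) (j k : ℕ) (hj : 0 < j) (hk : 0 < k)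
    (b : M) (hb : IsStrongAtomM b) (h : a ^ j = b ^ k) : a = b := by
  have := ha.2 j hj (Multiset.replicate k b)
    (fun c hc => (Multiset.eq_of_mem_replicate hc) ▸ hb.1)
    (by rw [Multiset.prod_replicate, ← h])
  have hbmem : b ∈ Multiset.replicate k b := Multiset.mem_replicate.2 ⟨hk.ne', rfl⟩
  rw [this] at hbmem
  exact (Multiset.eq_of_mem_replicate hbmem).symm

include htor in
/-- key lemma: distinct strong atoms have disjoint divisor supports -/
lemma EP_disj_support (a b : M) (ha : IsStrongAtomM a) (hb : IsStrongAtomM b) (hab : a ≠ b) :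
    Disjoint (EPnu τ a).support (EPnu τ b).support := by
  by_contra hdisj
  rw [Finset.disjoint_left] at hdisj
  push_neg at hdisj
  obtain ⟨i, hia, hib⟩ := hdisj
  rw [Finsupp.mem_support_iff] at hia hib
  set A := EPnu τ a with hA
  set B := EPnu τ b with hB
  -- not comparable
  have hnAB : ¬ A ≤ B := by
    intro hle
    obtain ⟨m, hm⟩ := (EP_dvd_iff τ hdt hred a b).2 hle
    rcases hb.1.2 a m hm with h' | h'
    · exact ha.1.1 h'
    · refine hab ?_; rw [hm, hred m h', mul_one]
  have hnBA : ¬ B ≤ A := by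
    intro hle
    obtain ⟨m, hm⟩ := (EP_dvd_iff τ hdt hred b a).2 hle
    rcases ha.1.2 b m hm with h' | h'
    · exact hb.1.1 h'
    · refine hab ?_; rw [hm, hred m h', mul_one]
  set D := A ⊓ B with hD
  have hDne : D ≠ 0 := by
    intro h0
    have : D i = 0 := by rw [h0]; rfl
    rw [Finsupp.inf_apply] at this
    rcases Nat.min_eq_zero_iff.mp this with h' | h' <;> [exact hia h'; exact hib h']
  have hADne : A - D ≠ 0 := by
    intro h0
    rw [tsub_eq_zero_iff_le] at h0
    exact hnAB (inf_eq_left.1 (le_antisymm inf_le_left h0))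
  have hBDne : B - D ≠ 0 := by
    intro h0
    rw [tsub_eq_zero_iff_le] at h0
    exact hnBA (inf_eq_right.1 (le_antisymm inf_le_right h0))
  obtain ⟨n, hn, u, v, w, hu, hv, hw⟩ :=
    EP_torsion3 τ hdt hred htor D (A - D) (B - D)
  have huv : u * v = a ^ n := by
    apply EP_tau_inj τ hdt hred
    rw [EPnu_mul, EPnu_pow, hu, hv, ← smul_add, add_tsub_cancel_of_le (inf_le_left : D ≤ A)]
  have huw : u * w = b ^ n := by
    apply EP_tau_inj τ hdt hred
    rw [EPnu_mul, EPnu_pow, hu, hw, ← smul_add, add_tsub_cancel_of_le (inf_le_right : D ≤ B)]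
  have hsmul : ∀ (f : ι →₀ ℕ), f ≠ 0 → n • f ≠ 0 := by
    intro f hf h0
    apply hf
    ext j
    have h2 := congrFun (congrArg (fun x : ι →₀ ℕ => (x : ι → ℕ)) h0) j
    simp only [Finsupp.coe_smul, Pi.smul_apply, smul_eq_mul, Finsupp.coe_zero,
      Pi.zero_apply] at h2
    simp only [Finsupp.coe_zero, Pi.zero_apply]
    rcases Nat.mul_eq_zero.1 h2 with h' | h'
    · omega
    · exact h'
  have hune : u ≠ 1 := fun h =>
    hsmul D hDne (by rw [← hu, h, EPnu_one])
  have hvne : v ≠ 1 := fun h =>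
    hsmul (A - D) hADne (by rw [← hv, h, EPnu_one])
  have hwne : w ≠ 1 := fun h =>
    hsmul (B - D) hBDne (by rw [← hw, h, EPnu_one])
  obtain ⟨su, hsu, hsup⟩ := EP_atomic τ hdt hred u
  obtain ⟨sv, hsv, hsvp⟩ := EP_atomic τ hdt hred v
  obtain ⟨sw, hsw, hswp⟩ := EP_atomic τ hdt hred w
  have hsu0 : su ≠ 0 := fun h => hune (by rw [← hsup, h, Multiset.prod_zero])
  -- all atoms in su + sv equal a
  have hrep1 : su + sv = Multiset.replicate n a := by
    apply ha.2 n hn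
    · intro c hc
      rcases Multiset.mem_add.1 hc with h' | h'
      exacts [hsu c h', hsv c h']
    · rw [Multiset.prod_add, hsup, hsvp, huv]
  have hrep2 : su + sw = Multiset.replicate n b := by
    apply hb.2 n hn
    · intro c hc
      rcases Multiset.mem_add.1 hc with h' | h'
      exacts [hsu c h', hsw c h']
    · rw [Multiset.prod_add, hsup, hswp, huw]
  have hua : u = a ^ (Multiset.card su) := by
    rw [← hsup]
    apply EP_prod_eq_pow_card
    intro c hc
    have : c ∈ su + sv := Multiset.mem_add.2 (Or.inl hc)
    rw [hrep1] at this
    exact Multiset.eq_of_mem_replicate this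
  have hub : u = b ^ (Multiset.card su) := by
    rw [← hsup]
    apply EP_prod_eq_pow_card
    intro c hc
    have : c ∈ su + sw := Multiset.mem_add.2 (Or.inl hc)
    rw [hrep2] at this
    exact Multiset.eq_of_mem_replicate this
  have hcard : 0 < Multiset.card su := Multiset.card_pos.2 hsu0
  exact hab (EP_dvd_strong τ hdt hred htor a ha _ _ hcard hcard b hb (hua ▸ hub))

omit hdt hred in
lemma EP_count_sum {α : Type*} [DecidableEq α] (f : α → ℕ) (a : α) :
    ∀ (s : Multiset α), (∀ c ∈ s, c ≠ a → f c = 0) →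
    (s.map f).sum = s.count a * f a := by
  intro s
  induction s using Multiset.induction with
  | empty => simp
  | cons x s ih =>
    intro h
    rw [Multiset.map_cons, Multiset.sum_cons,
      ih (fun c hc hc' => h c (Multiset.mem_cons_of_mem hc) hc'), Multiset.count_cons]
    by_cases hx : x = a
    · subst hx
      simp [add_mul, add_comm]
    · rw [h x (Multiset.mem_cons_self x s) hx]
      simp [Ne.symm hx]

omit hred in
lemma EP_nu_prod (s : Multiset M) : EPnu τ s.prod = (s.map (EPnu τ)).sum := by
  induction s using Multiset.induction with
  | empty => simp [EPnu_one]
  | cons x s ih => rw [Multiset.prod_cons, EPnu_mul, Multiset.map_cons, Multiset.sum_cons, ih]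

omit hdt hred in
lemma EP_sum_apply {α : Type*} (s : Multiset α) (g : α → (ι →₀ ℕ)) (i : ι) :
    ((s.map g).sum) i = (s.map (fun c => g c i)).sum := by
  induction s using Multiset.induction with
  | empty => simp
  | cons x s ih => simp [ih]

include htor in
/-- freeness: products of strong atoms factor uniquely -/
lemma EP_free (s t : Multiset M) (hs : ∀ c ∈ s, IsStrongAtomM c)
    (ht : ∀ c ∈ t, IsStrongAtomM c) (hp : s.prod = t.prod) : s = t := by
  classical
  have key : ∀ (s t : Multiset M), (∀ c ∈ s, IsStrongAtomM c) → (∀ c ∈ t, IsStrongAtomM c) →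
      s.prod = t.prod → ∀ a ∈ s, s.count a = t.count a := by
    intro s t hs ht hp a has
    have haS := hs a has
    have hne : EPnu τ a ≠ 0 := fun h =>
      EP_atom_ne_one τ hdt hred a haS.1 ((EP_eq_one_iff τ hdt hred a).2 h)
    obtain ⟨i, hi⟩ : ∃ i, (EPnu τ a) i ≠ 0 := by
      by_contra hc
      push_neg at hc
      exact hne (Finsupp.ext fun j => hc j)
    have hcoord : ∀ (u : Multiset M), (∀ c ∈ u, IsStrongAtomM c) →
        (EPnu τ u.prod) i = u.count a * (EPnu τ a) i := by
      intro u hu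
      rw [EP_nu_prod τ hdt, EP_sum_apply]
      apply EP_count_sum
      intro c hc hca
      have hdis := EP_disj_support τ hdt hred htor c a (hu c hc) haS hca
      rw [Finset.disjoint_right] at hdis
      by_contra hci
      exact hdis (Finsupp.mem_support_iff.2 hi) (Finsupp.mem_support_iff.2 hci)
    have h1 := hcoord s hs
    have h2 := hcoord t ht
    rw [hp, h2] at h1
    exact (Nat.eq_of_mul_eq_mul_right (Nat.pos_of_ne_zero hi) h1).symm
  ext a
  by_cases has : a ∈ s
  · exact key s t hs ht hp a has
  · by_cases hat : a ∈ t
    · exact (key t s ht hs hp.symm a hat).symm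
    · rw [Multiset.count_eq_zero_of_notMem has, Multiset.count_eq_zero_of_notMem hat]

end Alg

section Analytic
open Finset

theorem EP_expand {A : Type*} [DecidableEq A] (g : A → ℝ) (t : Finset A) (N : ℕ) :
    ∃ E : Finset (A →₀ ℕ),
      (∀ e ∈ E, e.support ⊆ t) ∧
      (∀ e : A →₀ ℕ, e.support ⊆ t → (∀ a, e a ≤ N) → e ∈ E) ∧
      (∑ e ∈ E, e.prod fun a n => g a ^ n) = ∏ a ∈ t, ∑ k ∈ Finset.range (N + 1), g a ^ k := by
  induction t using Finset.induction with
  | empty =>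
    refine ⟨{0}, ?_, ?_, ?_⟩
    · intro e he
      rw [Finset.mem_singleton] at he
      subst he
      simp
    · intro e hs _
      have : e = 0 := by
        ext a
        by_contra h
        exact absurd (hs (Finsupp.mem_support_iff.2 h)) (notMem_empty a)
      simp [this]
    · simp
  | @insert x t hx ih =>
    obtain ⟨E, hE1, hE2, hE3⟩ := ih
    refine ⟨((Finset.range (N + 1)) ×ˢ E).image fun p => Finsupp.single x p.1 + p.2, ?_, ?_, ?_⟩
    · intro e he
      obtain ⟨p, hp, rfl⟩ := Finset.mem_image.1 he
      intro a ha
      rcases Finset.mem_union.1 (Finsupp.support_add ha) with h' | h'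
      · exact Finset.mem_insert.2 (Or.inl (Finset.mem_singleton.1 (Finsupp.support_single_subset h')))
      · exact Finset.mem_insert.2 (Or.inr (hE1 p.2 (Finset.mem_product.1 hp).2 h'))
    · intro e hs hb
      refine Finset.mem_image.2 ⟨(e x, e.erase x), ?_, Finsupp.single_add_erase x e⟩
      refine Finset.mem_product.2 ⟨Finset.mem_range.2 (Nat.lt_succ_of_le (hb x)), ?_⟩
      apply hE2
      · intro a ha
        rw [Finsupp.support_erase] at ha
        have := hs (Finset.mem_of_mem_erase ha)
        rcases Finset.mem_insert.1 this with h' | h'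
        · exact absurd h' (Finset.ne_of_mem_erase ha)
        · exact h'
      · intro a
        rcases eq_or_ne a x with rfl | h'
        · simp
        · rw [Finsupp.erase_ne h']; exact hb a
    · rw [Finset.sum_image, Finset.sum_product]
      · have hterm : ∀ k ∈ Finset.range (N+1), ∀ e ∈ E,
            ((Finsupp.single x k + e).prod fun a n => g a ^ n)
              = g x ^ k * (e.prod fun a n => g a ^ n) := by
          intro k _ e _
          rw [Finsupp.prod_add_index' (fun a => pow_zero (g a)) (fun a m n => pow_add (g a) m n)]
          congr 1
          exact Finsupp.prod_single_index (pow_zero (g x))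
        rw [Finset.prod_insert hx, ← hE3, Finset.sum_congr rfl fun k hk =>
          Finset.sum_congr rfl fun e he => hterm k hk e he]
        rw [← Finset.sum_mul_sum]
      · -- injectivity on the product set
        intro p hp q hq h
        have hps : p.2 x = 0 := Finsupp.notMem_support_iff.1
          (fun hc => hx (hE1 p.2 (Finset.mem_product.1 hp).2 hc))
        have hqs : q.2 x = 0 := Finsupp.notMem_support_iff.1
          (fun hc => hx (hE1 q.2 (Finset.mem_product.1 hq).2 hc))
        have h1 : p.1 = q.1 := by
          have := congrFun (congrArg (fun u : A →₀ ℕ => (u : A → ℕ)) h) x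
          simpa [Finsupp.add_apply, Finsupp.single_eq_same, hps, hqs] using this
        have h2 : p.2 = q.2 := by
          simp only [h1] at h
          exact add_left_cancel h
        exact Prod.ext h1 h2

theorem EP_geom_le (x : ℝ) (h0 : 0 ≤ x) (h1 : x < 1) (m : ℕ) :
    (∑ k ∈ Finset.range m, x ^ k) ≤ (1 - x)⁻¹ := by
  have h1x : (0:ℝ) < 1 - x := by linarith
  rw [inv_eq_one_div, le_div_iff₀ h1x]
  have hgm := geom_sum_mul x m
  have hxm : (0:ℝ) ≤ x ^ m := pow_nonneg h0 m
  nlinarith [hgm]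

theorem EP_one_le_inv (x : ℝ) (h0 : 0 < x) (h1 : x < 1) : 1 ≤ (1 - x)⁻¹ := by
  rw [le_inv_comm₀ one_pos (by linarith)]
  linarith

theorem EP_analytic {A C : Type*} (g : A → ℝ) (hg0 : ∀ a, 0 < g a) (hg1 : ∀ a, g a < 1)
    (f : C → ℝ) (π : (A →₀ ℕ) → C) (hinj : Function.Injective π)
    (hsurj : Function.Surjective π)
    (hf : ∀ e, f (π e) = e.prod fun a n => g a ^ n) :
    ((∃ l, SumConvergesTo f l) ↔ (∃ l, SumConvergesTo g l)) ∧
    (∀ l, SumConvergesTo f l → ProdConvergesTo (fun a => 1 / (1 - g a)) l) := by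
  classical
  have hfpos : ∀ c, 0 ≤ f c := by
    intro c
    obtain ⟨e, rfl⟩ := hsurj c
    rw [hf]
    exact Finset.prod_nonneg fun a _ => pow_nonneg (hg0 a).le _
  -- geometric expansions are partial sums of f
  have hmem : ∀ (t : Finset A) (N : ℕ), ∃ s : Finset C,
      (∑ x ∈ s, f x) = ∏ a ∈ t, ∑ k ∈ Finset.range (N + 1), g a ^ k := by
    intro t N
    obtain ⟨E, _, _, hE3⟩ := EP_expand g t N
    refine ⟨E.image π, ?_⟩
    rw [Finset.sum_image (fun e1 _ e2 _ h => hinj h), ← hE3]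
    exact Finset.sum_congr rfl fun e _ => hf e
  -- every partial sum of f is below a partial product
  have hsum_le : ∀ s : Finset C, ∃ t : Finset A,
      (∑ x ∈ s, f x) ≤ ∏ a ∈ t, (1 - g a)⁻¹ := by
    intro s
    set e_ : C → (A →₀ ℕ) := fun x => Classical.choose (hsurj x) with he_
    have hπe : ∀ x, π (e_ x) = x := fun x => Classical.choose_spec (hsurj x)
    set t := s.sup fun x => (e_ x).support with ht
    set N := s.sup fun x => (e_ x).sum fun _ n => n with hN
    obtain ⟨E, hE1, hE2, hE3⟩ := EP_expand g t N
    have hdegle : ∀ (e : A →₀ ℕ) (a : A), e a ≤ e.sum fun _ n => n := by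
      intro e a
      by_cases h : a ∈ e.support
      · exact Finset.single_le_sum (fun _ _ => Nat.zero_le _) h
      · rw [Finsupp.notMem_support_iff.1 h]; exact Nat.zero_le _
    have hsub : s ⊆ E.image π := by
      intro x hxs
      refine Finset.mem_image.2 ⟨e_ x, hE2 _ ?_ ?_, hπe x⟩
      · exact fun a ha => Finset.le_sup (f := fun x => (e_ x).support) hxs ha
      · intro a
        exact le_trans (hdegle _ a)
          (Finset.le_sup (f := fun x => (e_ x).sum fun _ n => n) hxs)
    refine ⟨t, ?_⟩
    calc (∑ x ∈ s, f x) ≤ ∑ x ∈ E.image π, f x :=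
          Finset.sum_le_sum_of_subset_of_nonneg hsub fun c _ _ => hfpos c
      _ = ∏ a ∈ t, ∑ k ∈ Finset.range (N + 1), g a ^ k := by
          rw [Finset.sum_image (fun e1 _ e2 _ h => hinj h), ← hE3]
          exact Finset.sum_congr rfl fun e _ => hf e
      _ ≤ ∏ a ∈ t, (1 - g a)⁻¹ := by
          refine Finset.prod_le_prod (fun a _ => ?_) (fun a _ => ?_)
          · exact Finset.sum_nonneg fun k _ => pow_nonneg (hg0 a).le k
          · exact EP_geom_le (g a) (hg0 a).le (hg1 a) (N + 1)
  -- partial products are below the sum's lub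
  have hprod_le : ∀ l, SumConvergesTo f l → ∀ t : Finset A,
      (∏ a ∈ t, (1 - g a)⁻¹) ≤ l := by
    intro l hl t
    have hNle : ∀ N : ℕ, (∏ a ∈ t, ∑ k ∈ Finset.range (N + 1), g a ^ k) ≤ l := by
      intro N
      obtain ⟨s, hs⟩ := hmem t N
      exact hs ▸ hl.1 ⟨s, rfl⟩
    have htend : Filter.Tendsto (fun N => ∏ a ∈ t, ∑ k ∈ Finset.range (N + 1), g a ^ k)
        Filter.atTop (nhds (∏ a ∈ t, (1 - g a)⁻¹)) := by
      apply tendsto_finset_prod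
      intro a _
      have hs := hasSum_geometric_of_lt_one (hg0 a).le (hg1 a)
      exact hs.tendsto_sum_nat.comp (Filter.tendsto_add_atTop_nat 1)
    exact le_of_tendsto htend (Filter.Eventually.of_forall hNle)
  have main2 : ∀ l, SumConvergesTo f l → ProdConvergesTo (fun a => 1 / (1 - g a)) l := by
    intro l hl
    constructor
    · rintro y ⟨t, rfl⟩
      rw [Finset.prod_congr rfl fun a _ => one_div (1 - g a)]
      exact hprod_le l hl t
    · intro u hu
      apply hl.2
      rintro y ⟨s, rfl⟩
      obtain ⟨t, hts⟩ := hsum_le s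
      refine hts.trans ?_
      have : (∏ a ∈ t, (1 - g a)⁻¹) = ∏ a ∈ t, 1 / (1 - g a) :=
        Finset.prod_congr rfl fun a _ => (one_div (1 - g a)).symm
      rw [this]
      exact hu ⟨t, rfl⟩
  refine ⟨⟨?_, ?_⟩, main2⟩
  · rintro ⟨l, hl⟩
    have hub : ∀ t : Finset A, (∑ a ∈ t, g a) ≤ l := by
      intro t
      have hinj2 : ∀ a1 ∈ t, ∀ a2 ∈ t,
          π (Finsupp.single a1 1) = π (Finsupp.single a2 1) → a1 = a2 := by
        intro a1 _ a2 _ h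
        have h2 := hinj h
        by_contra hne
        have h3 := congrFun (congrArg (fun u : A →₀ ℕ => (u : A → ℕ)) h2) a1
        simp [Finsupp.single_eq_same, Finsupp.single_eq_of_ne hne] at h3
      have heq : (∑ a ∈ t, g a) = ∑ x ∈ t.image (fun a => π (Finsupp.single a 1)), f x := by
        rw [Finset.sum_image hinj2]
        refine (Finset.sum_congr rfl fun a _ => ?_).symm
        rw [hf]
        rw [show ((Finsupp.single a 1).prod fun a n => g a ^ n) = g a ^ 1 from
          Finsupp.prod_single_index (pow_zero (g a)), pow_one]
      rw [heq]
      exact hl.1 ⟨_, rfl⟩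
    have hne : Set.Nonempty {y : ℝ | ∃ s : Finset A, y = ∑ x ∈ s, g x} := ⟨0, ∅, by simp⟩
    exact Real.exists_isLUB hne ⟨l, by rintro y ⟨t, rfl⟩; exact hub t⟩
  · rintro ⟨lg, hlg⟩
    have hgub : ∀ t : Finset A, (∑ a ∈ t, g a) ≤ lg := fun t => hlg.1 ⟨t, rfl⟩
    have hfin : {a : A | 1/2 < g a}.Finite := by
      by_contra hinf
      have hinf' : {a : A | 1/2 < g a}.Infinite := hinf
      obtain ⟨n, hn⟩ := exists_nat_gt (2 * lg)
      obtain ⟨tset, hts, htc⟩ := hinf'.exists_subset_card_eq n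
      have hsum := hgub tset
      have hlow : (tset.card : ℝ) * (1/2) ≤ ∑ a ∈ tset, g a := by
        have h := Finset.card_nsmul_le_sum tset g (1/2) (fun a ha => (hts ha).le)
        simpa [nsmul_eq_mul] using h
      rw [htc] at hlow
      linarith
    set tb := hfin.toFinset with htb
    set B := (∏ a ∈ tb, (1 - g a)⁻¹) * Real.exp (2 * lg) with hB
    have hBprod : ∀ t : Finset A, (∏ a ∈ t, (1 - g a)⁻¹) ≤ B := by
      intro t
      rw [← Finset.prod_inter_mul_prod_diff t tb]
      refine mul_le_mul ?_ ?_ ?_ ?_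
      · have hone : (1:ℝ) ≤ ∏ a ∈ tb \ (t ∩ tb), (1 - g a)⁻¹ := by
          refine le_trans (le_of_eq
            (Finset.prod_const_one (s := tb \ (t ∩ tb))).symm) ?_
          exact Finset.prod_le_prod (fun a _ => zero_le_one)
            (fun a _ => EP_one_le_inv _ (hg0 a) (hg1 a))
        rw [← Finset.prod_sdiff (Finset.inter_subset_right : t ∩ tb ⊆ tb)]
        exact le_mul_of_one_le_left
          (Finset.prod_nonneg fun a _ => inv_nonneg.2 (by linarith [hg1 a])) hone
      · have hsmall : ∀ a ∈ t \ tb, g a ≤ 1/2 := by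
          intro a ha
          have : a ∉ tb := (Finset.mem_sdiff.1 ha).2
          rw [htb, Set.Finite.mem_toFinset] at this
          exact le_of_not_gt this
        calc (∏ a ∈ t \ tb, (1 - g a)⁻¹) ≤ ∏ a ∈ t \ tb, Real.exp (2 * g a) := by
              refine Finset.prod_le_prod (fun a _ => ?_) (fun a ha => ?_)
              · exact inv_nonneg.2 (by linarith [hg1 a])
              · have h1 : (0:ℝ) < 1 - g a := by linarith [hg1 a]
                have hha := hsmall a ha
                have hc : (1 - g a)⁻¹ ≤ 1 + 2 * g a := by
                  rw [inv_eq_one_div, div_le_iff₀ h1]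
                  nlinarith [hg0 a]
                have hd := Real.add_one_le_exp (2 * g a)
                linarith
          _ = Real.exp (∑ a ∈ t \ tb, 2 * g a) := (Real.exp_sum _ _).symm
          _ ≤ Real.exp (2 * lg) := by
              apply Real.exp_le_exp.2
              rw [← Finset.mul_sum]
              have := hgub (t \ tb)
              nlinarith [hgub (t \ tb), (Finset.sum_nonneg fun a _ => (hg0 a).le :
                (0:ℝ) ≤ ∑ a ∈ t \ tb, g a)]
      · exact Finset.prod_nonneg fun a _ => inv_nonneg.2 (by linarith [hg1 a])
      · exact Finset.prod_nonneg fun a _ => inv_nonneg.2 (by linarith [hg1 a])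
    have hfb : ∀ s : Finset C, (∑ x ∈ s, f x) ≤ B := by
      intro s
      obtain ⟨t, hts⟩ := hsum_le s
      exact hts.trans (hBprod t)
    exact Real.exists_isLUB ⟨0, ∅, by simp⟩ ⟨B, by rintro y ⟨s, rfl⟩; exact hfb s⟩

end Analytic

lemma EP_toMultiset_inj {α : Type*} (e1 e2 : α →₀ ℕ) (h : e1.toMultiset = e2.toMultiset) :
    e1 = e2 := by
  classical
  ext a
  have := congrArg (Multiset.count a) h
  simpa using this

lemma EP_mprod {α β : Type*} [CommMonoid β] (h : α → β) (e : α →₀ ℕ) :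
    (e.toMultiset.map h).prod = e.prod fun a n => h a ^ n := by
  refine e.induction ?_ ?_
  · simp
  · intro a n f _ _ ih
    rw [Finsupp.toMultiset_add, Multiset.map_add, Multiset.prod_add, ih,
      Finsupp.toMultiset_single,
      Finsupp.prod_add_index' (fun a => pow_zero (h a)) (fun a m n => pow_add (h a) m n),
      show ((Finsupp.single a n).prod fun a k => h a ^ k) = h a ^ n from
        Finsupp.prod_single_index (pow_zero (h a))]
    congr 1
    rw [Multiset.map_nsmul, Multiset.prod_nsmul, Multiset.map_singleton,
      Multiset.prod_singleton]

/-- Generalized Euler product formula: for a scale `σ` on a reduced Krull monoid `M` with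
torsion class group, the sum `∑_{x ∈ ⟨S(M)⟩} 1/σ(x)` converges iff `∑_{a ∈ S(M)} 1/σ(a)`
does, and in that case it equals the product `∏_{a ∈ S(M)} 1/(1 - 1/σ(a))`. -/
theorem euler_product_for_krull_monoids
    {M ι : Type*} [CancelCommMonoid M] (τ : M →* Multiplicative (ι →₀ ℕ))
    (hdt : IsDivisorTheory τ) (htor : HasTorsionClassGroup τ) (hred : IsReducedM M)
    (σ : M →* ℝˣ) (hσ : ∀ a : M, IsStrongAtomM a → 1 < ((σ a : ℝˣ) : ℝ)) :
    ((∃ l : ℝ, SumConvergesTo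
        (fun x : ↥(Submonoid.closure {a : M | IsStrongAtomM a}) => 1 / ((σ ↑x : ℝˣ) : ℝ)) l) ↔
      (∃ l : ℝ, SumConvergesTo
        (fun a : {a : M // IsStrongAtomM a} => 1 / ((σ ↑a : ℝˣ) : ℝ)) l)) ∧
    (∀ l : ℝ, SumConvergesTo
        (fun x : ↥(Submonoid.closure {a : M | IsStrongAtomM a}) => 1 / ((σ ↑x : ℝˣ) : ℝ)) l →
      ProdConvergesTo
        (fun a : {a : M // IsStrongAtomM a} => 1 / (1 - 1 / ((σ ↑a : ℝˣ) : ℝ))) l) := by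
  classical
  set S : Set M := {a : M | IsStrongAtomM a} with hS
  let A := {a : M // IsStrongAtomM a}
  let C := ↥(Submonoid.closure S)
  let g : A → ℝ := fun a => 1 / ((σ ↑a : ℝˣ) : ℝ)
  let f : C → ℝ := fun x => 1 / ((σ ↑x : ℝˣ) : ℝ)
  have hg0 : ∀ a : A, 0 < g a := fun a => by
    have := hσ a a.2
    simp only [g, one_div]
    positivity
  have hg1 : ∀ a : A, g a < 1 := fun a => by
    have h1 := hσ a a.2
    rw [show g a = 1 / ((σ ↑a : ℝˣ) : ℝ) from rfl, div_lt_one (by linarith)]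
    exact h1
  -- the parametrization of the closure by exponent vectors
  have hmemπ : ∀ e : A →₀ ℕ, ((e.toMultiset.map Subtype.val).prod : M) ∈ Submonoid.closure S := by
    intro e
    refine Submonoid.multiset_prod_mem _ _ ?_
    intro y hy
    obtain ⟨a, _, rfl⟩ := Multiset.mem_map.1 hy
    exact Submonoid.subset_closure a.2
  let π : (A →₀ ℕ) → C := fun e => ⟨(e.toMultiset.map Subtype.val).prod, hmemπ e⟩
  have hπ_strong : ∀ (e : A →₀ ℕ) (c : M), c ∈ e.toMultiset.map Subtype.val →
      IsStrongAtomM c := by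
    intro e c hc
    obtain ⟨a, _, rfl⟩ := Multiset.mem_map.1 hc
    exact a.2
  have hinj : Function.Injective π := by
    intro e1 e2 h
    have hp : (e1.toMultiset.map Subtype.val).prod = (e2.toMultiset.map Subtype.val).prod :=
      congrArg Subtype.val h
    have hms := EP_free τ hdt hred htor _ _ (hπ_strong e1) (hπ_strong e2) hp
    have hms2 := Multiset.map_injective (Subtype.val_injective) hms
    exact EP_toMultiset_inj _ _ hms2
  have hsurj : Function.Surjective π := by
    intro x
    obtain ⟨lst, hl, hp⟩ := Submonoid.exists_list_of_mem_closure x.2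
    let m : Multiset M := ↑lst
    have hm : ∀ y ∈ m, IsStrongAtomM y := fun y hy => hl y (Multiset.mem_coe.1 hy)
    let m' : Multiset A := m.pmap (fun y hy => (⟨y, hy⟩ : A)) hm
    have hmv : m'.map Subtype.val = m := by
      simp [m', Multiset.map_pmap, Multiset.pmap_eq_map]
    refine ⟨Multiset.toFinsupp m', ?_⟩
    apply Subtype.ext
    show ((Multiset.toFinsupp m').toMultiset.map Subtype.val).prod = (x : M)
    rw [Multiset.toFinsupp_toMultiset, hmv]
    simpa [m] using hp
  -- the value identity
  let ρ : M →* ℝ := (Units.coeHom ℝ).comp ((invMonoidHom).comp σ)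
  have hρ : ∀ m : M, ρ m = 1 / ((σ m : ℝˣ) : ℝ) := by
    intro m
    show (((σ m)⁻¹ : ℝˣ) : ℝ) = 1 / ((σ m : ℝˣ) : ℝ)
    rw [Units.val_inv_eq_inv_val, one_div]
  have hf : ∀ e : A →₀ ℕ, f (π e) = e.prod fun a n => g a ^ n := by
    intro e
    show 1 / ((σ ((e.toMultiset.map Subtype.val).prod) : ℝˣ) : ℝ) = _
    rw [← hρ, ← Multiset.prod_hom _ ρ, Multiset.map_map, EP_mprod]
    exact Finsupp.prod_congr fun a _ => by rw [Function.comp, hρ]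
  have := EP_analytic g hg0 hg1 f π hinj hsurj hf
  exact this
end

section
/- Let M be a reduced Krull monoid with torsion class group and σ a scale on M such that ∑_{a ∈ S(M)} 1/σ(a) converges. Then M is a unique factorization monoid if and only if ∑_{x ∈ M} 1/σ(x) = ∏_{p ∈ P(M)} 1/(1 − 1/σ(p)), where P(M) is the set of prime elements of M. -/
namespace EulerAux

variable {M : Type*} [CancelCommMonoid M]

theorem multiset_prod_unit {s : Multiset M} (hs : ∀ a ∈ s, ¬ IsUnit a)
    (h : IsUnit s.prod) : s = 0 := by
  induction s using Multiset.induction with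
  | empty => rfl
  | cons a s ih =>
    exfalso
    rw [Multiset.prod_cons] at h
    exact hs a (Multiset.mem_cons_self a s) (isUnit_of_mul_isUnit_left h)

theorem prime_dvd_multiset_prod {p : M} (hp : IsPrimeM p) {s : Multiset M}
    (h : p ∣ s.prod) : ∃ q ∈ s, p ∣ q := by
  induction s using Multiset.induction with
  | empty => exact absurd (isUnit_of_dvd_one (by simpa using h)) hp.1
  | cons a s ih =>
    rw [Multiset.prod_cons] at h
    rcases hp.2 _ _ h with h' | h'
    · exact ⟨a, Multiset.mem_cons_self a s, h'⟩
    · rcases ih h' with ⟨q, hq, hpq⟩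
      exact ⟨q, Multiset.mem_cons_of_mem hq, hpq⟩

theorem prime_eq_of_dvd (hred : IsReducedM M) {p q : M} (hp : IsPrimeM p)
    (hq : IsPrimeM q) (h : p ∣ q) : p = q := by
  obtain ⟨r, hr⟩ := h
  have hqd : q ∣ p * r := hr ▸ dvd_rfl
  have hru : IsUnit r := by
    rcases hq.2 _ _ hqd with h' | h'
    · obtain ⟨w, hw⟩ := h'
      have h1 : q * 1 = q * (w * r) := by
        rw [mul_one]
        calc q = p * r := hr
        _ = q * w * r := by rw [hw]
        _ = q * (w * r) := by rw [mul_assoc]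
      exact IsUnit.of_mul_eq_one (a := r) w (by rw [mul_comm]; exact (mul_left_cancel h1).symm)
    · obtain ⟨w, hw⟩ := h'
      have h1 : r * 1 = r * (p * w) := by
        rw [mul_one]
        calc r = q * w := hw
        _ = p * r * w := by rw [hr]
        _ = r * (p * w) := by rw [mul_comm p r, mul_assoc]
      exact absurd (IsUnit.of_mul_eq_one (a := p) w (mul_left_cancel h1).symm) hp.1
  rw [hred r hru, mul_one] at hr
  exact hr.symm

theorem prime_multiset_eq (hred : IsReducedM M) :
    ∀ (s t : Multiset M), (∀ p ∈ s, IsPrimeM p) → (∀ p ∈ t, IsPrimeM p) →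
      s.prod = t.prod → s = t := by
  intro s
  induction s using Multiset.induction with
  | empty =>
    intro t _ ht h
    exact (multiset_prod_unit (fun a ha => (ht a ha).1) (by rw [← h]; simp)).symm
  | cons p s ih =>
    intro t hs ht h
    have hp := hs p (Multiset.mem_cons_self p s)
    have hdvd : p ∣ t.prod := by rw [← h, Multiset.prod_cons]; exact dvd_mul_right _ _
    obtain ⟨q, hq, hpq⟩ := prime_dvd_multiset_prod hp hdvd
    have hpeq : p = q := prime_eq_of_dvd hred hp (ht q hq) hpq
    subst hpeq
    obtain ⟨t', rfl⟩ := Multiset.exists_cons_of_mem hq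
    rw [Multiset.prod_cons, Multiset.prod_cons] at h
    rw [ih t' (fun a ha => hs a (Multiset.mem_cons_of_mem ha))
      (fun a ha => ht a (Multiset.mem_cons_of_mem ha)) (mul_left_cancel h)]

theorem dvd_prime_prod (hred : IsReducedM M) :
    ∀ (m : Multiset M), (∀ p ∈ m, IsPrimeM p) → ∀ y : M, y ∣ m.prod →
      ∃ u : Multiset M, (∀ p ∈ u, IsPrimeM p) ∧ u.prod = y := by
  intro m
  induction m using Multiset.induction with
  | empty =>
    intro _ y hy
    refine ⟨0, by simp, ?_⟩
    simp only [Multiset.prod_zero]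
    exact (hred y (isUnit_of_dvd_one (by simpa using hy))).symm
  | cons p m ih =>
    intro hm y hy
    obtain ⟨z, hz⟩ := hy
    rw [Multiset.prod_cons] at hz
    have hp := hm p (Multiset.mem_cons_self p m)
    rcases hp.2 y z (by rw [← hz]; exact dvd_mul_right _ _) with h' | h'
    · obtain ⟨y', hy'⟩ := h'
      have hc : p * (y' * z) = p * m.prod := by
        rw [← mul_assoc, ← hy', ← hz]
      obtain ⟨u, hu, hup⟩ := ih (fun a ha => hm a (Multiset.mem_cons_of_mem ha)) y'
        ⟨z, (mul_left_cancel hc).symm⟩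
      exact ⟨p ::ₘ u, by
        intro q hq
        rcases Multiset.mem_cons.mp hq with rfl | hq'
        · exact hp
        · exact hu q hq', by rw [Multiset.prod_cons, hup, ← hy']⟩
    · obtain ⟨z', hz'⟩ := h'
      have hc : p * (y * z') = p * m.prod := by
        calc p * (y * z') = y * (p * z') := by rw [← mul_assoc, mul_comm p y, mul_assoc]
        _ = y * z := by rw [← hz']
        _ = p * m.prod := hz.symm
      exact ih (fun a ha => hm a (Multiset.mem_cons_of_mem ha)) y
        ⟨z', (mul_left_cancel hc).symm⟩

theorem isAtom_of_isPrime {p : M} (hp : IsPrimeM p) : IsAtomM p := by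
  refine ⟨hp.1, fun b c h => ?_⟩
  rcases hp.2 b c (h ▸ dvd_rfl) with h' | h'
  · obtain ⟨w, hw⟩ := h'
    right
    have h1 : p * 1 = p * (w * c) := by
      rw [mul_one]
      calc p = b * c := h
      _ = p * w * c := by rw [hw]
      _ = p * (w * c) := by rw [mul_assoc]
    exact IsUnit.of_mul_eq_one (a := c) w (by rw [mul_comm]; exact (mul_left_cancel h1).symm)
  · obtain ⟨w, hw⟩ := h'
    left
    have h1 : p * 1 = p * (w * b) := by
      rw [mul_one]
      calc p = b * c := h
      _ = b * (p * w) := by rw [hw]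
      _ = p * (w * b) := by rw [mul_comm b, mul_assoc, mul_comm w b]
    exact IsUnit.of_mul_eq_one (a := b) w (by rw [mul_comm]; exact (mul_left_cancel h1).symm)

theorem prime_of_atom_dvd_prime_prod (hred : IsReducedM M) {m : Multiset M}
    (hm : ∀ p ∈ m, IsPrimeM p) {a : M} (ha : IsAtomM a) (h : a ∣ m.prod) :
    IsPrimeM a := by
  obtain ⟨u, hu, hup⟩ := dvd_prime_prod hred m hm a h
  rcases Multiset.empty_or_exists_mem u with rfl | ⟨q, hq⟩
  · exact absurd (by simpa using hup ▸ isUnit_one : IsUnit a) ha.1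
  · obtain ⟨u', rfl⟩ := Multiset.exists_cons_of_mem hq
    rw [Multiset.prod_cons] at hup
    have hqp := hu q (Multiset.mem_cons_self q u')
    rcases ha.2 q u'.prod hup.symm with h' | h'
    · exact absurd h' hqp.1
    · have : u' = 0 := multiset_prod_unit
        (fun b hb => (hu b (Multiset.mem_cons_of_mem hb)).1) h'
      subst this
      simp only [Multiset.prod_zero, mul_one] at hup
      exact hup ▸ hqp

theorem pow_inj (hred : IsReducedM M) {p : M} (hpu : ¬ IsUnit p) {a b : ℕ}
    (h : p ^ a = p ^ b) : a = b := by
  have key : ∀ a b : ℕ, a ≤ b → p ^ a = p ^ b → a = b := by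
    intro a b hab h
    have h1 : p ^ a * p ^ (b - a) = p ^ a * 1 := by
      rw [← pow_add, Nat.add_sub_cancel' hab, mul_one, h]
    have h2 := mul_left_cancel h1
    rcases Nat.eq_zero_or_pos (b - a) with h0 | h0
    · omega
    · exfalso
      obtain ⟨k, hk⟩ : ∃ k, b - a = k + 1 := ⟨b - a - 1, by omega⟩
      rw [hk] at h2
      exact hpu (IsUnit.of_mul_eq_one (a := p) (p ^ k)
        (by rw [← pow_succ' p k]; exact h2))
  rcases le_total a b with hab | hab
  · exact key a b hab h
  · exact (key b a hab h.symm).symm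

theorem isStrongAtom_of_isPrime (hred : IsReducedM M) {p : M} (hp : IsPrimeM p) :
    IsStrongAtomM p := by
  refine ⟨isAtom_of_isPrime hp, fun n hn s hs hprod => ?_⟩
  have hrep : ∀ q ∈ Multiset.replicate n p, IsPrimeM q := by
    intro q hq; rw [Multiset.eq_of_mem_replicate hq]; exact hp
  have hall : ∀ a ∈ s, a = p := by
    intro a ha
    have hdvd : a ∣ (Multiset.replicate n p).prod := by
      rw [Multiset.prod_replicate, ← hprod]
      exact Multiset.dvd_prod ha
    have haP : IsPrimeM a := prime_of_atom_dvd_prime_prod hred hrep (hs a ha)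
      hdvd
    obtain ⟨q, hq, haq⟩ := prime_dvd_multiset_prod haP hdvd
    rw [Multiset.eq_of_mem_replicate hq] at haq
    exact prime_eq_of_dvd hred haP hp haq
  have hcard : s = Multiset.replicate (Multiset.card s) p :=
    Multiset.eq_replicate_card.mpr hall
  have : p ^ Multiset.card s = p ^ n := by
    rw [← Multiset.prod_replicate, ← hcard, hprod]
  rw [hcard, pow_inj hred hp.1 this]

end EulerAux

namespace EulerAux

open Filter

variable {M : Type*} [CancelCommMonoid M]

theorem geom_partial_le {c : ℝ} (hc : 1 < c) (n : ℕ) :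
    ∑ k ∈ Finset.range n, (1/c)^k ≤ (1 - 1/c)⁻¹ := by
  have hc0 : (0:ℝ) < c := lt_trans one_pos hc
  have h0 : (0:ℝ) ≤ 1/c := by positivity
  have h1 : 1/c < 1 := by rw [div_lt_one hc0]; linarith
  exact sum_le_hasSum _ (fun i _ => by positivity) (hasSum_geometric_of_lt_one h0 h1)

theorem geom_tendsto {c : ℝ} (hc : 1 < c) :
    Tendsto (fun n : ℕ => ∑ k ∈ Finset.range n, (1/c)^k) atTop (nhds (1 - 1/c)⁻¹) := by
  have hc0 : (0:ℝ) < c := lt_trans one_pos hc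
  have h0 : (0:ℝ) ≤ 1/c := by positivity
  have h1 : 1/c < 1 := by rw [div_lt_one hc0]; linarith
  exact (hasSum_geometric_of_lt_one h0 h1).tendsto_sum_nat

theorem one_le_f_prod (f : M →* ℝ) (hf : ∀ p : M, IsPrimeM p → 1 < f p) :
    ∀ (m : Multiset M), (∀ p ∈ m, IsPrimeM p) → 1 ≤ f m.prod := by
  intro m
  induction m using Multiset.induction with
  | empty => intro _; simp
  | cons a m ih =>
    intro hm
    rw [Multiset.prod_cons, map_mul]
    have h1 := hf a (hm a (Multiset.mem_cons_self a m))
    have h2 := ih (fun q hq => hm q (Multiset.mem_cons_of_mem hq))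
    nlinarith

theorem box_exists [DecidableEq M] (hred : IsReducedM M) (f : M →* ℝ) (N : ℕ) :
    ∀ s : Finset M, (∀ p ∈ s, IsPrimeM p) →
    ∃ T : Finset M,
      (∀ x ∈ T, ∃ m : Multiset M, (∀ q ∈ m, q ∈ s) ∧ m.prod = x ∧ ∀ q : M, m.count q ≤ N) ∧
      (∀ m : Multiset M, (∀ q ∈ m, q ∈ s) → (∀ q : M, m.count q ≤ N) → m.prod ∈ T) ∧
      ∑ x ∈ T, 1 / f x = ∏ p ∈ s, ∑ k ∈ Finset.range (N+1), (1 / f p)^k := by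
  intro s
  induction s using Finset.induction with
  | empty =>
    intro _
    refine ⟨{1}, ?_, ?_, ?_⟩
    · intro x hx
      rw [Finset.mem_singleton] at hx
      exact ⟨0, by simp, by simp [hx], by simp⟩
    · intro m hm _
      have : m = 0 := Multiset.eq_zero_of_forall_notMem
        (fun q hq => by simpa using hm q hq)
      simp [this]
    · simp
  | @insert p s' hps ih =>
    intro hs
    obtain ⟨T', hT1, hT2, hT3⟩ := ih (fun q hq => hs q (Finset.mem_insert_of_mem hq))
    have hp := hs p (Finset.mem_insert_self p s')
    have hcount0 : ∀ (m : Multiset M), (∀ q ∈ m, q ∈ s') → m.count p = 0 := by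
      intro m hm
      exact Multiset.count_eq_zero.mpr (fun hmem => hps (hm p hmem))
    have hinj : ∀ z ∈ Finset.range (N+1) ×ˢ T', ∀ w ∈ Finset.range (N+1) ×ˢ T',
        (fun z : ℕ × M => p ^ z.1 * z.2) z = (fun z : ℕ × M => p ^ z.1 * z.2) w → z = w := by
      rintro ⟨k, y⟩ hz ⟨j, y'⟩ hw heq
      simp only [Finset.mem_product, Finset.mem_range] at hz hw
      obtain ⟨my, hmy1, hmy2, hmy3⟩ := hT1 y hz.2
      obtain ⟨my', hmy1', hmy2', hmy3'⟩ := hT1 y' hw.2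
      have hprods : (Multiset.replicate k p + my).prod
          = (Multiset.replicate j p + my').prod := by
        rw [Multiset.prod_add, Multiset.prod_add, Multiset.prod_replicate,
          Multiset.prod_replicate, hmy2, hmy2']
        exact heq
      have hmem1 : ∀ q ∈ Multiset.replicate k p + my, IsPrimeM q := by
        intro q hq
        rcases Multiset.mem_add.mp hq with hq | hq
        · rw [Multiset.eq_of_mem_replicate hq]; exact hp
        · exact hs q (Finset.mem_insert_of_mem (hmy1 q hq))
      have hmem2 : ∀ q ∈ Multiset.replicate j p + my', IsPrimeM q := by
        intro q hq
        rcases Multiset.mem_add.mp hq with hq | hq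
        · rw [Multiset.eq_of_mem_replicate hq]; exact hp
        · exact hs q (Finset.mem_insert_of_mem (hmy1' q hq))
      have hmeq := prime_multiset_eq hred _ _ hmem1 hmem2 hprods
      have hk : k = j := by
        have := congrArg (Multiset.count p) hmeq
        simpa [Multiset.count_add, Multiset.count_replicate,
          hcount0 my hmy1, hcount0 my' hmy1'] using this
      subst hk
      have hyy : y = y' := by
        rw [add_left_cancel hmeq] at hmy2
        rw [← hmy2, hmy2']
      rw [hyy]
    refine ⟨(Finset.range (N+1) ×ˢ T').image (fun z => p ^ z.1 * z.2), ?_, ?_, ?_⟩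
    · intro x hx
      obtain ⟨⟨k, y⟩, hz, rfl⟩ := Finset.mem_image.mp hx
      simp only [Finset.mem_product, Finset.mem_range] at hz
      obtain ⟨my, hmy1, hmy2, hmy3⟩ := hT1 y hz.2
      refine ⟨Multiset.replicate k p + my, ?_, ?_, ?_⟩
      · intro q hq
        rcases Multiset.mem_add.mp hq with hq | hq
        · rw [Multiset.eq_of_mem_replicate hq]; exact Finset.mem_insert_self p s'
        · exact Finset.mem_insert_of_mem (hmy1 q hq)
      · rw [Multiset.prod_add, Multiset.prod_replicate, hmy2]
      · intro q
        rw [Multiset.count_add, Multiset.count_replicate]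
        by_cases hq : q = p
        · rw [if_pos hq.symm, hq, hcount0 my hmy1, add_zero]
          exact Nat.lt_succ_iff.mp hz.1
        · rw [if_neg (fun h => hq h.symm), zero_add]
          exact hmy3 q
    · intro m hm hcnt
      have hsplit := Multiset.filter_add_not (fun q => q = p) m
      set m' := Multiset.filter (fun q => ¬ q = p) m with hm'def
      have hfe : Multiset.filter (fun q => q = p) m = Multiset.replicate (m.count p) p :=
        Multiset.filter_eq' m p
      have hm'mem : ∀ q ∈ m', q ∈ s' := by
        intro q hq
        have h := Multiset.mem_filter.mp hq
        rcases Finset.mem_insert.mp (hm q h.1) with h' | h'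
        · exact absurd h' h.2
        · exact h'
      have hm'cnt : ∀ q : M, m'.count q ≤ N := fun q =>
        le_trans (Multiset.count_le_of_le q (Multiset.filter_le _ m)) (hcnt q)
      refine Finset.mem_image.mpr ⟨(m.count p, m'.prod), ?_, ?_⟩
      · simp only [Finset.mem_product, Finset.mem_range]
        exact ⟨Nat.lt_succ_of_le (hcnt p), hT2 m' hm'mem hm'cnt⟩
      · calc p ^ m.count p * m'.prod
            = (Multiset.replicate (m.count p) p + m').prod := by
              rw [Multiset.prod_add, Multiset.prod_replicate]
          _ = m.prod := by rw [← hfe, hsplit]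
    · rw [Finset.sum_image hinj, Finset.prod_insert hps, ← hT3, Finset.sum_product,
        Finset.sum_mul_sum]
      refine Finset.sum_congr rfl (fun k _ => Finset.sum_congr rfl (fun y _ => ?_))
      rw [map_mul, map_pow, one_div, one_div, one_div, mul_inv, inv_pow]

theorem box_prod_le (f : M →* ℝ) {s : Finset M} (hs : ∀ p ∈ s, IsPrimeM p)
    (hf : ∀ p : M, IsPrimeM p → 1 < f p) (N : ℕ) :
    ∏ p ∈ s, ∑ k ∈ Finset.range (N+1), (1/f p)^k ≤ ∏ p ∈ s, (1 - 1/f p)⁻¹ := by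
  refine Finset.prod_le_prod (fun p hp => Finset.sum_nonneg fun k _ => ?_)
    (fun p hp => geom_partial_le (hf p (hs p hp)) _)
  have h0 : (0:ℝ) < f p := lt_trans one_pos (hf p (hs p hp))
  exact pow_nonneg (le_of_lt (div_pos one_pos h0)) k

theorem box_prod_tendsto (f : M →* ℝ) {s : Finset M} (hs : ∀ p ∈ s, IsPrimeM p)
    (hf : ∀ p : M, IsPrimeM p → 1 < f p) :
    Tendsto (fun N : ℕ => ∏ p ∈ s, ∑ k ∈ Finset.range (N+1), (1/f p)^k)
      atTop (nhds (∏ p ∈ s, (1 - 1/f p)⁻¹)) := by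
  apply tendsto_finset_prod
  intro p hp
  exact (geom_tendsto (hf p (hs p hp))).comp (tendsto_add_atTop_nat 1)

end EulerAux


namespace EulerAux

theorem one_le_prod_real {α : Type*} {s : Finset α} {F : α → ℝ}
    (h : ∀ i ∈ s, 1 ≤ F i) : 1 ≤ ∏ i ∈ s, F i := by
  induction s using Finset.cons_induction with
  | empty => simp
  | cons a s ha ih =>
    rw [Finset.prod_cons]
    have h1 := h a (Finset.mem_cons_self a s)
    have h2 := ih (fun i hi => h i (Finset.mem_cons.mpr (Or.inr hi)))
    nlinarith

theorem prod_le_prod_subset_real {α : Type*} [DecidableEq α] {s t : Finset α} {F : α → ℝ}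
    (hst : s ⊆ t) (h : ∀ i ∈ t, 1 ≤ F i) : ∏ i ∈ s, F i ≤ ∏ i ∈ t, F i := by
  rw [← Finset.prod_sdiff hst]
  have h1 : 1 ≤ ∏ i ∈ t \ s, F i :=
    one_le_prod_real (fun i hi => h i (Finset.mem_sdiff.mp hi).1)
  have h2 : 1 ≤ ∏ i ∈ s, F i := one_le_prod_real (fun i hi => h i (hst hi))
  nlinarith

end EulerAux

/-- Let `M` be a reduced Krull monoid with torsion class group, with a scale `σ` such that
`∑_{a ∈ S(M)} 1/σ(a)` converges. Then `M` is a unique factorization monoid iff Euler's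
classical product formula holds: `∑_{x ∈ M} 1/σ(x) = ∏_{p ∈ P(M)} 1/(1 - 1/σ(p))`. -/
theorem UFM_iff_euler_product
    {M ι : Type*} [CancelCommMonoid M] (τ : M →* Multiplicative (ι →₀ ℕ))
    (hdt : IsDivisorTheory τ) (htor : HasTorsionClassGroup τ) (hred : IsReducedM M)
    (σ : M →* ℝˣ) (hσ : ∀ a : M, IsStrongAtomM a → 1 < ((σ a : ℝˣ) : ℝ))
    (hconv : ∃ l : ℝ, SumConvergesTo
      (fun a : {a : M // IsStrongAtomM a} => 1 / ((σ ↑a : ℝˣ) : ℝ)) l) :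
    (∀ x : M, ∃ s : Multiset M, (∀ a ∈ s, IsAtomM a) ∧ s.prod = x ∧
        ∀ t : Multiset M, (∀ a ∈ t, IsAtomM a) → t.prod = x → t = s) ↔
      (∃ l : ℝ, SumConvergesTo (fun x : M => 1 / ((σ x : ℝˣ) : ℝ)) l ∧
        ProdConvergesTo (fun p : {p : M // IsPrimeM p} => 1 / (1 - 1 / ((σ ↑p : ℝˣ) : ℝ))) l) := by
  classical
  obtain ⟨f, hfeq⟩ : ∃ f : M →* ℝ, ∀ x : M, ((σ x : ℝˣ) : ℝ) = f x :=
    ⟨(Units.coeHom ℝ).comp σ, fun x => rfl⟩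
  simp only [hfeq] at hσ hconv ⊢
  have hf0 : ∀ x : M, f x ≠ 0 := by
    intro x; rw [← hfeq]; exact Units.ne_zero (σ x)
  have hfP : ∀ p : M, IsPrimeM p → 1 < f p :=
    fun p hp => hσ p (EulerAux.isStrongAtom_of_isPrime hred hp)
  have hfac1 : ∀ p : M, IsPrimeM p → (0:ℝ) < 1 - 1 / f p := by
    intro p hp
    have h1 := hfP p hp
    have h2 : 0 < f p := lt_trans one_pos h1
    have h3 : 1 / f p < 1 := by rw [div_lt_one h2]; linarith
    linarith
  constructor
  · -- UFM implies Euler product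
    intro U
    have hatomprime : ∀ a : M, IsAtomM a → IsPrimeM a := by
      intro a ha
      refine ⟨ha.1, fun b c hdvd => ?_⟩
      obtain ⟨d, hd⟩ := hdvd
      obtain ⟨sb, hsb, hsbp, _⟩ := U b
      obtain ⟨sc, hsc, hscp, _⟩ := U c
      obtain ⟨sd, hsd, hsdp, _⟩ := U d
      obtain ⟨s0, hs0, hs0p, huniq⟩ := U (b * c)
      have h1 : sb + sc = s0 := huniq (sb + sc)
        (fun q hq => (Multiset.mem_add.mp hq).elim (hsb q) (hsc q))
        (by rw [Multiset.prod_add, hsbp, hscp])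
      have h2 : a ::ₘ sd = s0 := huniq (a ::ₘ sd)
        (fun q hq => (Multiset.mem_cons.mp hq).elim (fun h => by rw [h]; exact ha) (hsd q))
        (by rw [Multiset.prod_cons, hsdp, ← hd])
      have hmem : a ∈ sb + sc := by rw [h1, ← h2]; exact Multiset.mem_cons_self a sd
      rcases Multiset.mem_add.mp hmem with h | h
      · exact Or.inl (hsbp ▸ Multiset.dvd_prod h)
      · exact Or.inr (hscp ▸ Multiset.dvd_prod h)
    have hU' : ∀ x : M, ∃ m : Multiset M, (∀ p ∈ m, IsPrimeM p) ∧ m.prod = x := by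
      intro x
      obtain ⟨s, hs, hsp, _⟩ := U x
      exact ⟨s, fun p hp => hatomprime p (hs p hp), hsp⟩
    obtain ⟨L, hL⟩ := hconv
    have hL0 : (0:ℝ) ≤ L := hL.1 ⟨∅, by simp⟩
    have hsum_primes : ∀ t : Finset {p : M // IsPrimeM p}, ∑ p ∈ t, 1 / f p.1 ≤ L := by
      intro t
      have heq : ∑ a ∈ t.image (fun p : {p : M // IsPrimeM p} =>
              (⟨p.1, EulerAux.isStrongAtom_of_isPrime hred p.2⟩ : {a : M // IsStrongAtomM a})),
            1 / f a.1 = ∑ p ∈ t, 1 / f p.1 :=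
        Finset.sum_image (fun x _ y _ h => Subtype.ext (Subtype.mk_eq_mk.mp h))
      rw [← heq]
      exact hL.1 ⟨_, rfl⟩
    have hBfin : {p : {p : M // IsPrimeM p} | f p.1 ≤ 2}.Finite := by
      by_contra hinf
      obtain ⟨t, hts, htc⟩ :=
        Set.Infinite.exists_subset_card_eq hinf (⌈2 * L⌉₊ + 1)
      have h1 : t.card • ((1:ℝ)/2) ≤ ∑ p ∈ t, 1 / f p.1 := by
        refine Finset.card_nsmul_le_sum t _ _ (fun p hp => ?_)
        have hmem : f p.1 ≤ 2 := hts (Finset.mem_coe.mpr hp)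
        have h2 : (0:ℝ) < f p.1 := lt_trans one_pos (hfP p.1 p.2)
        rw [div_le_div_iff₀ two_pos h2]
        linarith
      have h2 := hsum_primes t
      have h3 : 2 * L ≤ (⌈2 * L⌉₊ : ℝ) := Nat.le_ceil (2 * L)
      rw [nsmul_eq_mul, htc] at h1
      push_cast at h1
      linarith
    set Bf : Finset {p : M // IsPrimeM p} := hBfin.toFinset with hBdef
    have hfacpos : ∀ p : {p : M // IsPrimeM p}, (0:ℝ) < 1 / (1 - 1 / f p.1) :=
      fun p => div_pos one_pos (hfac1 p.1 p.2)
    have hfac2 : ∀ p : {p : M // IsPrimeM p}, (1:ℝ) ≤ 1 / (1 - 1 / f p.1) := by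
      intro p
      rw [le_div_iff₀ (hfac1 p.1 p.2), one_mul]
      have h2 : 0 < f p.1 := lt_trans one_pos (hfP p.1 p.2)
      have : 0 < 1 / f p.1 := div_pos one_pos h2
      linarith
    have hCbound : ∀ t : Finset {p : M // IsPrimeM p},
        ∏ p ∈ t, 1 / (1 - 1 / f p.1)
          ≤ (∏ p ∈ Bf, 1 / (1 - 1 / f p.1)) * Real.exp (2 * L) := by
      intro t
      rw [← Finset.prod_inter_mul_prod_diff t Bf]
      have hA : ∏ p ∈ t ∩ Bf, 1 / (1 - 1/f p.1) ≤ ∏ p ∈ Bf, 1 / (1 - 1/f p.1) :=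
        EulerAux.prod_le_prod_subset_real Finset.inter_subset_right
          (fun p _ => hfac2 p)
      have hB : ∏ p ∈ t \ Bf, 1 / (1 - 1/f p.1) ≤ Real.exp (2 * L) := by
        have h1 : ∏ p ∈ t \ Bf, 1 / (1 - 1/f p.1)
            ≤ ∏ p ∈ t \ Bf, Real.exp (2 * (1/f p.1)) := by
          refine Finset.prod_le_prod (fun p _ => le_of_lt (hfacpos p)) ?_
          intro p hp
          have hp2 : ¬ f p.1 ≤ 2 := by
            have hmem := Finset.mem_sdiff.mp hp
            intro hle
            exact hmem.2 (hBfin.mem_toFinset.mpr hle)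
          push_neg at hp2
          have h2 : (0:ℝ) < f p.1 := lt_trans one_pos (hfP p.1 p.2)
          have hu : 1 / f p.1 < 1/2 := by
            rw [div_lt_div_iff₀ h2 two_pos]; linarith
          have hu0 : 0 < 1 / f p.1 := div_pos one_pos h2
          have step1 : 1 / (1 - 1/f p.1) ≤ 1 + 2 * (1/f p.1) := by
            rw [div_le_iff₀ (hfac1 p.1 p.2)]
            nlinarith
          have step2 : 1 + 2 * (1/f p.1) ≤ Real.exp (2 * (1/f p.1)) := by
            have := Real.add_one_le_exp (2 * (1/f p.1))
            linarith
          linarith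
        have h2 : ∏ p ∈ t \ Bf, Real.exp (2 * (1/f p.1))
            = Real.exp (∑ p ∈ t \ Bf, 2 * (1/f p.1)) := (Real.exp_sum _ _).symm
        have h3 : ∑ p ∈ t \ Bf, 2 * (1/f p.1) ≤ 2 * L := by
          rw [← Finset.mul_sum]
          have := hsum_primes (t \ Bf)
          linarith
        calc ∏ p ∈ t \ Bf, 1 / (1 - 1/f p.1) ≤ _ := h1
          _ = _ := h2
          _ ≤ Real.exp (2*L) := Real.exp_le_exp.mpr h3
      have hBnn : (0:ℝ) ≤ ∏ p ∈ t \ Bf, 1 / (1 - 1/f p.1) :=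
        Finset.prod_nonneg (fun p _ => le_of_lt (hfacpos p))
      have hAnn : (0:ℝ) ≤ ∏ p ∈ Bf, 1 / (1 - 1/f p.1) :=
        Finset.prod_nonneg (fun p _ => le_of_lt (hfacpos p))
      exact mul_le_mul hA hB hBnn hAnn
    obtain ⟨l, hl⟩ := Real.exists_isLUB
      (⟨1, ∅, by simp⟩ : Set.Nonempty
        {y : ℝ | ∃ t : Finset {p : M // IsPrimeM p}, y = ∏ p ∈ t, 1 / (1 - 1 / f p.1)})
      ⟨(∏ p ∈ Bf, 1 / (1 - 1 / f p.1)) * Real.exp (2 * L), by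
        rintro y ⟨t, rfl⟩
        exact hCbound t⟩
    -- choice of prime factorizations
    have hm0P : ∀ x : M, (∀ p ∈ Classical.choose (hU' x), IsPrimeM p) ∧
        (Classical.choose (hU' x)).prod = x := fun x => Classical.choose_spec (hU' x)
    set m0 : M → Multiset M := fun x => Classical.choose (hU' x) with hm0
    have hxnn : ∀ x : M, (0:ℝ) ≤ 1 / f x := by
      intro x
      have h1 : 1 ≤ f ((m0 x).prod) := EulerAux.one_le_f_prod f hfP (m0 x) (hm0P x).1
      rw [(hm0P x).2] at h1
      positivity
    have hupper : ∀ S : Finset M, ∑ x ∈ S, 1 / f x ≤ l := by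
      intro S
      set s : Finset M := S.biUnion (fun x => (m0 x).toFinset) with hsdef
      have hsP : ∀ q ∈ s, IsPrimeM q := by
        intro q hq
        obtain ⟨x, hx, hq'⟩ := Finset.mem_biUnion.mp hq
        exact (hm0P x).1 q (Multiset.mem_toFinset.mp hq')
      set N : ℕ := S.sup (fun x => Multiset.card (m0 x)) with hNdef
      obtain ⟨T, hT1, hT2, hT3⟩ := EulerAux.box_exists hred f N s hsP
      have hST : S ⊆ T := by
        intro x hx
        have h := hT2 (m0 x)
          (fun q hq => Finset.mem_biUnion.mpr ⟨x, hx, Multiset.mem_toFinset.mpr hq⟩)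
          (fun q => le_trans (Multiset.count_le_card q (m0 x))
            (Finset.le_sup (f := fun x => Multiset.card (m0 x)) hx))
        rwa [(hm0P x).2] at h
      have h1 : ∑ x ∈ S, 1/f x ≤ ∑ x ∈ T, 1/f x :=
        Finset.sum_le_sum_of_subset_of_nonneg hST (fun x _ _ => hxnn x)
      have h2 : ∑ x ∈ T, 1/f x ≤ ∏ p ∈ s, (1 - 1/f p)⁻¹ := by
        rw [hT3]; exact EulerAux.box_prod_le f hsP hfP N
      have h3 : ∏ p ∈ s.attach.image
            (fun q => (⟨q.1, hsP q.1 q.2⟩ : {p : M // IsPrimeM p})), 1 / (1 - 1/f p.1)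
          = ∏ q ∈ s.attach, 1 / (1 - 1/f q.1) :=
        Finset.prod_image (fun x _ y _ h => Subtype.ext (Subtype.mk_eq_mk.mp h))
      have h3' : ∏ q ∈ s.attach, 1 / (1 - 1/f (q : M)) = ∏ q ∈ s, (1 - 1/f q)⁻¹ := by
        simp only [one_div]
        exact Finset.prod_attach s (fun q => (1 - (f q)⁻¹)⁻¹)
      have h4 : ∏ p ∈ s.attach.image
            (fun q => (⟨q.1, hsP q.1 q.2⟩ : {p : M // IsPrimeM p})), 1 / (1 - 1/f p.1) ≤ l :=
        hl.1 ⟨_, rfl⟩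
      linarith
    have hsumlub : IsLUB {y : ℝ | ∃ S : Finset M, y = ∑ x ∈ S, 1 / f x} l := by
      constructor
      · rintro y ⟨S, rfl⟩
        exact hupper S
      · intro u hu
        apply hl.2
        rintro y ⟨t, rfl⟩
        set s : Finset M := t.image Subtype.val with hsdef
        have hsP : ∀ q ∈ s, IsPrimeM q := by
          intro q hq
          obtain ⟨p, _, rfl⟩ := Finset.mem_image.mp hq
          exact p.2
        have hb1 : ∏ q ∈ t.image Subtype.val, (1 - 1/f q)⁻¹ = ∏ p ∈ t, (1 - 1/f p.1)⁻¹ :=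
          Finset.prod_image (fun x _ y _ h => Subtype.ext h)
        have hb2 : ∏ p ∈ t, (1 - 1/f p.1)⁻¹ = ∏ p ∈ t, 1 / (1 - 1/f p.1) := by
          simp only [one_div]
        rw [← hb2, ← hb1, ← hsdef]
        refine le_of_tendsto (EulerAux.box_prod_tendsto f hsP hfP)
          (Filter.Eventually.of_forall fun N => ?_)
        obtain ⟨T, hT1, hT2, hT3⟩ := EulerAux.box_exists hred f N s hsP
        rw [← hT3]
        exact hu ⟨T, rfl⟩
    exact ⟨l, hsumlub, hl⟩
  · -- Euler product implies UFM
    rintro ⟨l, hsum, hprod⟩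
    have key : ∀ x : M, ∃ m : Multiset M, (∀ p ∈ m, IsPrimeM p) ∧ m.prod = x := by
      by_contra hcon
      push_neg at hcon
      obtain ⟨x, hx⟩ := hcon
      have hxsq : ∀ m : Multiset M, (∀ p ∈ m, IsPrimeM p) → m.prod ≠ x * x := by
        intro m hm hprodeq
        obtain ⟨u, hu, hup⟩ := EulerAux.dvd_prime_prod hred m hm x ⟨x, hprodeq⟩
        exact hx u hu hup
      have hw0 : 0 < 1 / f (x * x) := by
        rw [map_mul]
        have h2 : 0 < f x * f x := mul_self_pos.mpr (hf0 x)
        positivity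
      have hstep : ∀ t : Finset {p : M // IsPrimeM p},
          ∏ p ∈ t, 1 / (1 - 1 / f p.1) ≤ l - 1 / f (x * x) := by
        intro t
        set s : Finset M := t.image Subtype.val with hsdef
        have hsP : ∀ q ∈ s, IsPrimeM q := by
          intro q hq
          obtain ⟨p, _, rfl⟩ := Finset.mem_image.mp hq
          exact p.2
        have hb1 : ∏ q ∈ t.image Subtype.val, (1 - 1/f q)⁻¹ = ∏ p ∈ t, (1 - 1/f p.1)⁻¹ :=
          Finset.prod_image (fun x _ y _ h => Subtype.ext h)
        have hb2 : ∏ p ∈ t, (1 - 1/f p.1)⁻¹ = ∏ p ∈ t, 1 / (1 - 1/f p.1) := by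
          simp only [one_div]
        rw [← hb2, ← hb1, ← hsdef]
        refine le_of_tendsto (EulerAux.box_prod_tendsto f hsP hfP)
          (Filter.Eventually.of_forall fun N => ?_)
        obtain ⟨T, hT1, hT2, hT3⟩ := EulerAux.box_exists hred f N s hsP
        have hwT : x * x ∉ T := by
          intro hw
          obtain ⟨m, hm1, hm2, _⟩ := hT1 _ hw
          exact hxsq m (fun p hp => hsP p (hm1 p hp)) hm2
        have hle : ∑ z ∈ insert (x*x) T, 1 / f z ≤ l := hsum.1 ⟨insert (x*x) T, rfl⟩
        rw [Finset.sum_insert hwT] at hle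
        rw [← hT3]
        linarith
      have hub : l ≤ l - 1 / f (x*x) := by
        apply hprod.2
        rintro y ⟨t, rfl⟩
        exact hstep t
      linarith
    intro x
    obtain ⟨m, hm, hmx⟩ := key x
    refine ⟨m, fun a ha => EulerAux.isAtom_of_isPrime (hm a ha), hmx, ?_⟩
    intro t ht htx
    have ht' : ∀ a ∈ t, IsPrimeM a := by
      intro a ha
      refine EulerAux.prime_of_atom_dvd_prime_prod hred hm (ht a ha) ?_
      rw [hmx, ← htx]
      exact Multiset.dvd_prod ha
    exact EulerAux.prime_multiset_eq hred t m ht' hm (by rw [htx, hmx])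
end
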